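/- Let Γ and Λ be two lattices (discrete subgroups) in ℝ^n. Then the dual of their intersection satisfies (Γ ∩ Λ)* = closure(Γ* + Λ*), where the closure is taken in ℝ^n. -/

import Mathlib

/-- A lattice: a discrete additive subgroup of `ℝⁿ`. -/
def IsDiscreteSubgroup {n : ℕ} (L : AddSubgroup (EuclideanSpace ℝ (Fin n))) : Prop :=
  ∃ ε > 0, ∀ x ∈ L, x ≠ 0 → ε ≤ ‖x‖

def dualSet {n : ℕ} (S : Set (EuclideanSpace ℝ (Fin n))) : Set (EuclideanSpace ℝ (Fin n)) :=
  {x | ∀ g ∈ S, ∃ k : ℤ, (inner ℝ x g : ℝ) = (k : ℝ)}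

section Aux

open Submodule Module

variable {E : Type*} [NormedAddCommGroup E] [InnerProductSpace ℝ E] [FiniteDimensional ℝ E]

/-- A subgroup with separated points has discrete topology. -/
lemma aux_disc_of_eps (L : AddSubgroup E) (h : ∃ ε > 0, ∀ x ∈ L, x ≠ 0 → ε ≤ ‖x‖) :
    DiscreteTopology L := by
  obtain ⟨ε, hε, hsep⟩ := h
  rw [discreteTopology_iff_isOpen_singleton]
  intro a
  have : {a} = (Subtype.val : L → E) ⁻¹' Metric.ball (a : E) ε := by
    ext x
    simp only [Set.mem_singleton_iff, Set.mem_preimage, Metric.mem_ball]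
    constructor
    · rintro rfl; simpa using hε
    · intro hd
      have hmem : (x : E) - (a : E) ∈ L := L.sub_mem x.2 a.2
      by_contra hne
      have hne' : (x : E) - (a : E) ≠ 0 := by
        simp only [sub_ne_zero]
        exact fun hc => hne (Subtype.ext hc)
      have := hsep _ hmem hne'
      rw [dist_eq_norm] at hd
      linarith
  rw [this]
  exact Metric.isOpen_ball.preimage continuous_subtype_val

/-- Version for `ℤ`-submodules. -/
lemma aux_disc_of_eps' (L : Submodule ℤ E) (h : ∃ ε > 0, ∀ x ∈ L, x ≠ 0 → ε ≤ ‖x‖) :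
    DiscreteTopology L :=
  aux_disc_of_eps L.toAddSubgroup h

/-- Lattice separation lemma: a point of `F` not in a discrete subgroup `L ⊆ F` can be
separated from `L` by a vector of `F` pairing integrally with `L`. -/
lemma aux_lattice_sep (L : Submodule ℤ E) [DiscreteTopology L] (F : Submodule ℝ E)
    (hLF : (L : Set E) ⊆ F) (w : E) (hwF : w ∈ F) (hw : w ∉ L) :
    ∃ y ∈ F, (∀ l ∈ L, ∃ k : ℤ, (inner ℝ y l : ℝ) = k) ∧ ¬ ∃ k : ℤ, (inner ℝ y w : ℝ) = k := by
  classical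
  set S : Submodule ℝ E := span ℝ (L : Set E) with hS
  have hSF : S ≤ F := span_le.mpr hLF
  by_cases hwS : w ∈ S
  · -- w in the real span of L
    set L₀ : Submodule ℤ S := L.comap ((S.subtype).restrictScalars ℤ) with hL₀
    have hdisc : DiscreteTopology L₀ := by
      refine DiscreteTopology.preimage_of_continuous_injective (L : Set E) ?_ (injective_subtype _)
      exact LinearMap.continuous_of_finiteDimensional S.subtype
    have hZL : IsZLattice ℝ L₀ := by
      constructor
      have h_img : S.subtype '' (L₀ : Set S) = (L : Set E) := by
        ext x
        constructor
        · rintro ⟨⟨x, hxS⟩, hx, rfl⟩; exact hx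
        · intro hx; exact ⟨⟨x, subset_span hx⟩, hx, rfl⟩
      rw [← (Submodule.map_injective_of_injective (injective_subtype S)).eq_iff,
        Submodule.map_span, Submodule.map_top, range_subtype, h_img, ← hS]
    have : Module.Finite ℤ L₀ := ZLattice.module_finite ℝ L₀
    have : Module.Free ℤ L₀ := ZLattice.module_free ℝ L₀
    set b := Free.chooseBasis ℤ L₀ with hb
    set bR := b.ofZLatticeBasis ℝ L₀ with hbR
    set ws : S := ⟨w, hwS⟩ with hws
    have hnotint : ∃ i, ¬ ∃ k : ℤ, bR.repr ws i = (k : ℝ) := by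
      by_contra hcon
      push_neg at hcon
      have : ws ∈ span ℤ (Set.range bR) := by
        rw [Basis.mem_span_iff_repr_mem]
        intro i
        obtain ⟨k, hk⟩ := hcon i
        exact ⟨k, by simpa using hk.symm⟩
      rw [b.ofZLatticeBasis_span ℝ] at this
      exact hw this
    obtain ⟨i, hi⟩ := hnotint
    set f : S →L[ℝ] ℝ := LinearMap.toContinuousLinearMap (bR.coord i) with hf
    set y₀ : S := (InnerProductSpace.toDual ℝ S).symm f with hy₀
    have hy₀app : ∀ s : S, (inner ℝ y₀ s : ℝ) = bR.coord i s := fun s =>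
      InnerProductSpace.toDual_symm_apply
    refine ⟨(y₀ : E), hSF y₀.2, ?_, ?_⟩
    · intro l hl
      have hlS : l ∈ S := subset_span hl
      have hlL₀ : (⟨l, hlS⟩ : S) ∈ L₀ := hl
      refine ⟨b.repr (⟨⟨l, hlS⟩, hlL₀⟩ : L₀) i, ?_⟩
      have h1 : (inner ℝ y₀ (⟨l, hlS⟩ : S) : ℝ) = bR.repr (⟨l, hlS⟩ : S) i := hy₀app _
      rw [Submodule.coe_inner] at h1
      have h2 : (inner ℝ (y₀ : E) l : ℝ) = bR.repr (⟨l, hlS⟩ : S) i := h1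
      rw [h2]
      exact_mod_cast Basis.ofZLatticeBasis_repr_apply ℝ L₀ b (⟨⟨l, hlS⟩, hlL₀⟩ : L₀) i
    · intro ⟨k, hk⟩
      refine hi ⟨k, ?_⟩
      have h1 : (inner ℝ y₀ ws : ℝ) = bR.repr ws i := hy₀app _
      rw [Submodule.coe_inner] at h1
      have h2 : (inner ℝ (y₀ : E) w : ℝ) = bR.repr ws i := h1
      rw [← h2]
      exact hk
  · -- w not in the real span of L
    set u : E := w - (orthogonalProjection S w : E) with hu
    have huS : u ∈ Sᗮ := Submodule.sub_starProjection_mem_orthogonal (K := S) w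
    have hune : u ≠ 0 := by
      intro hc
      apply hwS
      have : w = (orthogonalProjection S w : E) := by
        have := sub_eq_zero.mp hc; exact this
      rw [this]; exact (orthogonalProjection S w).2
    set y : E := (2 * ‖u‖ ^ 2)⁻¹ • u with hy
    have hupos : (0:ℝ) < ‖u‖ := norm_pos_iff.mpr hune
    have hpos : (0:ℝ) < 2 * ‖u‖ ^ 2 := by positivity
    refine ⟨y, ?_, ?_, ?_⟩
    · exact F.smul_mem _ (F.sub_mem hwF (hSF (orthogonalProjection S w).2))
    · intro l hl
      refine ⟨0, ?_⟩
      have : (inner ℝ u l : ℝ) = 0 := by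
        rw [real_inner_comm]
        exact (Submodule.mem_orthogonal S u).mp huS l (subset_span hl)
      rw [hy, real_inner_smul_left, this]
      simp
    · intro ⟨k, hk⟩
      have hiw : (inner ℝ u w : ℝ) = ‖u‖ ^ 2 := by
        have hdec : w = u + (orthogonalProjection S w : E) := by rw [hu]; abel
        have h0 : (inner ℝ u ((orthogonalProjection S w : E)) : ℝ) = 0 := by
          rw [real_inner_comm]
          exact (Submodule.mem_orthogonal S u).mp huS _ (orthogonalProjection S w).2
        rw [hdec, inner_add_right, h0, add_zero, real_inner_self_eq_norm_sq]
      rw [hy, real_inner_smul_left, hiw] at hk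
      have hval : (k : ℝ) = 2⁻¹ := by
        rw [← hk]
        field_simp
      have h1 : (2 * k : ℝ) = 1 := by rw [hval]; ring
      have h2 : (2 * k : ℤ) = 1 := by exact_mod_cast h1
      omega

/-- The "linear part" of a subgroup: vectors all of whose real multiples lie in it. -/
def linPart (H : AddSubgroup E) : Submodule ℝ E where
  carrier := {x | ∀ t : ℝ, t • x ∈ H}
  zero_mem' := fun t => by simpa using H.zero_mem
  add_mem' := fun {a b} ha hb t => by simpa [smul_add] using H.add_mem (ha t) (hb t)
  smul_mem' := fun c x hx t => by simpa [smul_smul] using hx (t * c)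

omit [FiniteDimensional ℝ E] in
lemma linPart_le (H : AddSubgroup E) : (linPart H : Set E) ⊆ H := fun x hx => by
  simpa using hx 1

/-- The part of a closed subgroup orthogonal to its linear part is discrete. -/
lemma aux_inter_orth_disc (H : AddSubgroup E) (hH : IsClosed (H : Set E)) :
    ∃ ε > 0, ∀ x ∈ (H : Set E) ∩ ((linPart H)ᗮ : Set E), x ≠ 0 → ε ≤ ‖x‖ := by
  by_contra hcon
  push_neg at hcon
  have hex : ∀ m : ℕ, ∃ x : E, x ∈ (H : Set E) ∩ ((linPart H)ᗮ : Set E) ∧ x ≠ 0 ∧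
      ‖x‖ < 1 / (m + 1) := by
    intro m
    obtain ⟨x, hx, hxe, hxn⟩ := hcon (1 / (m + 1)) (by positivity)
    exact ⟨x, hx, hxe, hxn⟩
  choose x hx hxne hxnorm using hex
  set u : ℕ → E := fun m => ‖x m‖⁻¹ • x m with hudef
  have hnormpos : ∀ m, (0:ℝ) < ‖x m‖ := fun m => norm_pos_iff.mpr (hxne m)
  have husph : ∀ m, u m ∈ Metric.sphere (0 : E) 1 := by
    intro m
    simp only [mem_sphere_iff_norm, sub_zero, hudef, norm_smul, norm_inv, norm_norm]
    exact inv_mul_cancel₀ (ne_of_gt (hnormpos m))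
  obtain ⟨ulim, hulimsph, φ, hφ, hconv⟩ :=
    (isCompact_sphere (0 : E) 1).tendsto_subseq husph
  have hulimnorm : ‖ulim‖ = 1 := by simpa using hulimsph
  have hnorm0 : Filter.Tendsto (fun j => ‖x (φ j)‖) Filter.atTop (nhds 0) := by
    refine squeeze_zero (fun j => (hnormpos _).le) (fun j => (hxnorm (φ j)).le) ?_
    exact tendsto_one_div_add_atTop_nhds_zero_nat.comp hφ.tendsto_atTop
  have hulimorth : ulim ∈ (linPart H)ᗮ := by
    have hcl : IsClosed ((linPart H)ᗮ : Set E) := (linPart H)ᗮ.closed_of_finiteDimensional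
    exact hcl.mem_of_tendsto hconv
      (Filter.Eventually.of_forall fun j =>
        ((linPart H)ᗮ.smul_mem _ (hx (φ j)).2 : (u ∘ φ) j ∈ (linPart H)ᗮ))
  have hulimlin : ulim ∈ linPart H := by
    intro t
    have key : Filter.Tendsto (fun j => (⌊t / ‖x (φ j)‖⌋ : ℤ) • x (φ j))
        Filter.atTop (nhds (t • ulim)) := by
      have heq : ∀ j, (⌊t / ‖x (φ j)‖⌋ : ℤ) • x (φ j)
          = ((⌊t / ‖x (φ j)‖⌋ : ℝ) * ‖x (φ j)‖) • u (φ j) := by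
        intro j
        rw [hudef]
        rw [smul_smul, ← Int.cast_smul_eq_zsmul ℝ]
        congr 1
        rw [mul_inv_cancel_right₀ (ne_of_gt (hnormpos (φ j)))]
      simp_rw [heq]
      refine Filter.Tendsto.smul ?_ hconv
      have hbound : ∀ j, |(⌊t / ‖x (φ j)‖⌋ : ℝ) * ‖x (φ j)‖ - t| ≤ ‖x (φ j)‖ := by
        intro j
        set a := ‖x (φ j)‖ with ha
        have hapos := hnormpos (φ j)
        have h1 : (⌊t / a⌋ : ℝ) ≤ t / a := Int.floor_le _
        have h2 : t / a - 1 < ⌊t / a⌋ := by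
          have := Int.lt_floor_add_one (t / a); linarith [Int.sub_one_lt_floor (t/a)]
        rw [abs_le]
        constructor
        · have : (t / a - 1) * a ≤ (⌊t / a⌋ : ℝ) * a := by nlinarith
          have h3 : (t / a - 1) * a = t - a := by rw [sub_mul, div_mul_cancel₀ t (ne_of_gt hapos : a ≠ 0), one_mul]
          nlinarith
        · have : (⌊t / a⌋ : ℝ) * a ≤ (t / a) * a := by nlinarith
          have h3 : (t / a) * a = t := by rw [div_mul_cancel₀ t (ne_of_gt hapos : a ≠ 0)]
          nlinarith
      have hsub : Filter.Tendsto (fun j => (⌊t / ‖x (φ j)‖⌋ : ℝ) * ‖x (φ j)‖ - t)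
          Filter.atTop (nhds 0) := squeeze_zero_norm hbound hnorm0
      exact tendsto_sub_nhds_zero_iff.mp hsub
    have hmem : ∀ j, (⌊t / ‖x (φ j)‖⌋ : ℤ) • x (φ j) ∈ H := fun j =>
      AddSubgroup.zsmul_mem H (hx (φ j)).1 _
    exact hH.mem_of_tendsto key (Filter.Eventually.of_forall hmem)
  have : ulim = 0 := by
    have h0 : (inner ℝ ulim ulim : ℝ) = 0 := hulimorth ulim hulimlin
    exact inner_self_eq_zero.mp h0
  rw [this] at hulimnorm
  simp at hulimnorm

/-- Separation lemma (pointwise bipolar theorem) for closed subgroups of a finite-dimensional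
real inner product space. -/
lemma aux_closed_sep (H : AddSubgroup E) (hH : IsClosed (H : Set E)) (x : E) (hx : x ∉ H) :
    ∃ y, (∀ h ∈ H, ∃ k : ℤ, (inner ℝ y h : ℝ) = k) ∧ ¬ ∃ k : ℤ, (inner ℝ y x : ℝ) = k := by
  set V := linPart H with hV
  set L : Submodule ℤ E := AddSubgroup.toIntSubmodule (H ⊓ Vᗮ.toAddSubgroup) with hL
  have hLmem : ∀ z : E, z ∈ L ↔ z ∈ H ∧ z ∈ Vᗮ := fun z => Iff.rfl
  have : DiscreteTopology L := by
    refine aux_disc_of_eps' L ?_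
    obtain ⟨ε, hε, hsep⟩ := aux_inter_orth_disc H hH
    exact ⟨ε, hε, fun z hz => hsep z ⟨(hLmem z).mp hz |>.1, (hLmem z).mp hz |>.2⟩⟩
  set v : E := (orthogonalProjection V x : E) with hv
  set w : E := x - v with hw
  have hwV : w ∈ Vᗮ := Submodule.sub_starProjection_mem_orthogonal (K := V) x
  have hwL : w ∉ L := by
    intro hc
    apply hx
    have : x = v + w := by rw [hw]; abel
    rw [this]
    exact H.add_mem (linPart_le H (orthogonalProjection V x).2) ((hLmem w).mp hc).1
  obtain ⟨y, hyV, hyint, hynon⟩ :=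
    aux_lattice_sep L Vᗮ (fun z hz => ((hLmem z).mp hz).2) w hwV hwL
  have horth : ∀ z ∈ V, (inner ℝ y z : ℝ) = 0 := by
    intro z hz
    rw [real_inner_comm]
    exact (Submodule.mem_orthogonal V y).mp hyV z hz
  refine ⟨y, ?_, ?_⟩
  · intro h hh
    set wh : E := h - (orthogonalProjection V h : E) with hwh
    have hwhL : wh ∈ L := by
      refine (hLmem wh).mpr ⟨?_, Submodule.sub_starProjection_mem_orthogonal (K := V) h⟩
      exact H.sub_mem hh (linPart_le H (orthogonalProjection V h).2)
    obtain ⟨k, hk⟩ := hyint wh hwhL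
    refine ⟨k, ?_⟩
    have : h = (orthogonalProjection V h : E) + wh := by rw [hwh]; abel
    rw [this, inner_add_right, horth _ (orthogonalProjection V h).2, zero_add, hk]
  · intro ⟨k, hk⟩
    apply hynon
    refine ⟨k, ?_⟩
    have : x = v + w := by rw [hw]; abel
    rw [this, inner_add_right, horth _ (orthogonalProjection V x).2, zero_add] at hk
    exact hk

end Aux

section DualSetLemmas

variable {n : ℕ}

lemma dualSet_isClosed (S : Set (EuclideanSpace ℝ (Fin n))) : IsClosed (dualSet S) := by
  have heq : dualSet S = ⋂ g ∈ S, (fun x : EuclideanSpace ℝ (Fin n) => (inner ℝ x g : ℝ)) ⁻¹'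
      (Set.range (Int.cast : ℤ → ℝ)) := by
    ext x
    simp only [dualSet, Set.mem_setOf_eq, Set.mem_iInter, Set.mem_preimage, Set.mem_range]
    exact ⟨fun h g hg => (h g hg).imp (fun k hk => hk.symm),
      fun h g hg => (h g hg).imp (fun k hk => hk.symm)⟩
  rw [heq]
  refine isClosed_biInter fun g hg => ?_
  exact Int.isClosedEmbedding_coe_real.isClosed_range.preimage
    (Continuous.inner continuous_id continuous_const)

lemma dualSet_zero_mem (S : Set (EuclideanSpace ℝ (Fin n))) : (0 : EuclideanSpace ℝ (Fin n)) ∈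
    dualSet S := fun g _ => ⟨0, by simp⟩

lemma dualSet_add_mem {S : Set (EuclideanSpace ℝ (Fin n))} {a b : EuclideanSpace ℝ (Fin n)}
    (ha : a ∈ dualSet S) (hb : b ∈ dualSet S) : a + b ∈ dualSet S := by
  intro g hg
  obtain ⟨k1, h1⟩ := ha g hg
  obtain ⟨k2, h2⟩ := hb g hg
  exact ⟨k1 + k2, by rw [inner_add_left, h1, h2]; push_cast; ring⟩

lemma dualSet_neg_mem {S : Set (EuclideanSpace ℝ (Fin n))} {a : EuclideanSpace ℝ (Fin n)}
    (ha : a ∈ dualSet S) : -a ∈ dualSet S := by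
  intro g hg
  obtain ⟨k, h⟩ := ha g hg
  exact ⟨-k, by rw [inner_neg_left, h]; push_cast; ring⟩

end DualSetLemmas

/-- duality identity `(Γ ∩ Λ)* = closure(Γ* + Λ*)` for lattices. -/
theorem stmt8 {n : ℕ} (Γ Λ : AddSubgroup (EuclideanSpace ℝ (Fin n)))
    (hΓ : IsDiscreteSubgroup Γ) (hΛ : IsDiscreteSubgroup Λ) :
    dualSet ((Γ : Set (EuclideanSpace ℝ (Fin n))) ∩ (Λ : Set (EuclideanSpace ℝ (Fin n)))) =
      closure {z | ∃ a ∈ dualSet (Γ : Set (EuclideanSpace ℝ (Fin n))), ∃ b ∈ dualSet (Λ : Set (EuclideanSpace ℝ (Fin n))), z = a + b} := by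
  classical
  set E := EuclideanSpace ℝ (Fin n)
  -- lattices are closed
  have hΓc : IsClosed (Γ : Set E) := by
    have := aux_disc_of_eps Γ hΓ
    exact AddSubgroup.isClosed_of_discrete
  have hΛc : IsClosed (Λ : Set E) := by
    have := aux_disc_of_eps Λ hΛ
    exact AddSubgroup.isClosed_of_discrete
  -- the sum of the dual sets, as a subgroup
  set A : AddSubgroup E :=
    { carrier := {z | ∃ a ∈ dualSet (Γ : Set E), ∃ b ∈ dualSet (Λ : Set E), z = a + b}
      zero_mem' := ⟨0, dualSet_zero_mem _, 0, dualSet_zero_mem _, by simp⟩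
      add_mem' := by
        rintro z₁ z₂ ⟨a₁, ha₁, b₁, hb₁, rfl⟩ ⟨a₂, ha₂, b₂, hb₂, rfl⟩
        exact ⟨a₁ + a₂, dualSet_add_mem ha₁ ha₂, b₁ + b₂, dualSet_add_mem hb₁ hb₂, by abel⟩
      neg_mem' := by
        rintro z ⟨a, ha, b, hb, rfl⟩
        exact ⟨-a, dualSet_neg_mem ha, -b, dualSet_neg_mem hb, by abel⟩ } with hA
  apply Set.Subset.antisymm
  · -- hard inclusion
    intro x hx
    by_contra hxc
    have hxc' : x ∉ A.topologicalClosure := by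
      intro hc
      exact hxc hc
    obtain ⟨y, hyint, hynon⟩ := aux_closed_sep A.topologicalClosure
      A.isClosed_topologicalClosure x hxc'
    -- y pairs integrally with everything in A, in particular with Γ* and Λ*
    have hydual : ∀ z : E, z ∈ dualSet (Γ : Set E) ∪ dualSet (Λ : Set E) →
        ∃ k : ℤ, (inner ℝ y z : ℝ) = k := by
      intro z hz
      refine hyint z (A.le_topologicalClosure ?_)
      rcases hz with hz | hz
      · exact ⟨z, hz, 0, dualSet_zero_mem _, by simp⟩
      · exact ⟨0, dualSet_zero_mem _, z, hz, by simp⟩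
    -- hence y ∈ Γ and y ∈ Λ by the separation lemma
    have hyΓ : y ∈ Γ := by
      by_contra hyc
      obtain ⟨z, hzint, hznon⟩ := aux_closed_sep Γ hΓc y hyc
      have hzdual : z ∈ dualSet (Γ : Set E) := fun g hg => hzint g hg
      obtain ⟨k, hk⟩ := hydual z (Or.inl hzdual)
      exact hznon ⟨k, by rw [real_inner_comm]; exact hk⟩
    have hyΛ : y ∈ Λ := by
      by_contra hyc
      obtain ⟨z, hzint, hznon⟩ := aux_closed_sep Λ hΛc y hyc
      have hzdual : z ∈ dualSet (Λ : Set E) := fun g hg => hzint g hg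
      obtain ⟨k, hk⟩ := hydual z (Or.inr hzdual)
      exact hznon ⟨k, by rw [real_inner_comm]; exact hk⟩
    obtain ⟨k, hk⟩ := hx y ⟨hyΓ, hyΛ⟩
    exact hynon ⟨k, by rw [real_inner_comm]; exact hk⟩
  · -- easy inclusion
    refine closure_minimal ?_ (dualSet_isClosed _)
    rintro z ⟨a, ha, b, hb, rfl⟩ g ⟨hg1, hg2⟩
    obtain ⟨k1, h1⟩ := ha g hg1
    obtain ⟨k2, h2⟩ := hb g hg2
    exact ⟨k1 + k2, by rw [inner_add_left, h1, h2]; push_cast; ring⟩
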